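/- Let Ω be a measurable space, and let E and X be Polish spaces. Let G : Ω → E be a closed-valued open-measurable multifunction and let F : Ω × E → X be a closed-valued open-measurable multifunction, where Ω × E carries the product σ-algebra of the σ-algebra of Ω and the Borel σ-algebra of E. Then the multifunction H : Ω → X defined by H(ω) := ⋃_{b ∈ G(ω)} F(ω, b) is universally open-measurable: for every open U ⊆ X and every finite measure μ on Ω, the set {ω | H(ω) ∩ U ≠ ∅} lies in the μ-completion of the σ-algebra of Ω. -/

import Mathlib

open MeasureTheory

section Aux
open Set Filter Topology

/-- Analytic sets in a Polish space are null-measurable w.r.t. any finite Borel measure. -/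
lemma analyticSet_nullMeasurableSet {X : Type*} [TopologicalSpace X] [PolishSpace X]
    [MeasurableSpace X] [BorelSpace X] (ν : Measure X) [IsFiniteMeasure ν]
    {S : Set X} (hS : AnalyticSet S) : NullMeasurableSet S ν := by
  rw [AnalyticSet_def] at hS
  rcases hS with rfl | ⟨f, hf, rfl⟩
  · exact MeasurableSet.empty.nullMeasurableSet
  -- Key capacitability step
  have key : ∀ c : ENNReal, c < ν (range f) →
      ∃ K, K ⊆ range f ∧ MeasurableSet K ∧ c ≤ ν K := by
    intro c hc
    classical
    set D : (ℕ → ℕ) → ℕ → Set (ℕ → ℕ) := fun τ k => {σ | ∀ i < k, σ i ≤ τ i} with hDdef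
    have hD0 : ∀ τ, D τ 0 = univ := by
      intro τ; ext σ; simp [hDdef]
    have step : ∀ τ k, c < ν (f '' D τ k) →
        ∃ n, c < ν (f '' D (Function.update τ k n) (k+1)) := by
      intro τ k h
      have hDU : (⋃ n : ℕ, D (Function.update τ k n) (k+1)) = D τ k := by
        ext σ
        simp only [mem_iUnion]
        constructor
        · rintro ⟨n, hn⟩
          have hn' : ∀ i < k + 1, σ i ≤ Function.update τ k n i := hn
          intro i hi
          have := hn' i (by omega)
          rwa [Function.update_of_ne (by omega)] at this
        · intro hσ
          have hσ' : ∀ i < k, σ i ≤ τ i := hσ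
          refine ⟨σ k, fun i hi => ?_⟩
          rcases eq_or_ne i k with rfl | hne
          · simp
          · rw [Function.update_of_ne hne]; exact hσ' i (by omega)
      have hU : (⋃ n : ℕ, f '' D (Function.update τ k n) (k+1)) = f '' D τ k := by
        rw [← image_iUnion, hDU]
      have hdir : Directed (· ⊆ ·) (fun n : ℕ => f '' D (Function.update τ k n) (k+1)) := by
        have hmono : Monotone (fun n : ℕ => f '' D (Function.update τ k n) (k+1)) := by
          intro a b hab
          apply image_mono
          intro σ hσ
          have hσ' : ∀ i < k + 1, σ i ≤ Function.update τ k a i := hσ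
          intro i hi
          rcases eq_or_ne i k with rfl | hne
          · have := hσ' i (by omega)
            rw [Function.update_self] at this ⊢
            omega
          · rw [Function.update_of_ne hne]
            have := hσ' i hi; rwa [Function.update_of_ne hne] at this
        exact hmono.directed_le
      rw [← hU, hdir.measure_iUnion] at h
      exact lt_iSup_iff.mp h
    -- recursive construction
    set g : (ℕ → ℕ) → ℕ → (ℕ → ℕ) := fun τ k =>
      if h : c < ν (f '' D τ k) then Function.update τ k (Classical.choose (step τ k h)) else τ
      with hgdef
    set T : ℕ → (ℕ → ℕ) := fun k => Nat.rec (fun _ => 0) (fun k ih => g ih k) k with hTdef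
    have hTsucc : ∀ k, T (k+1) = g (T k) k := fun k => rfl
    have hT : ∀ k, c < ν (f '' D (T k) k) := by
      intro k
      induction k with
      | zero => rw [hD0]; simpa [image_univ] using hc
      | succ k ih =>
        rw [hTsucc k, hgdef]
        simp only [ih, dif_pos]
        exact Classical.choose_spec (step (T k) k ih)
    have hTs : ∀ k i, i < k → T k i = T (i+1) i := by
      intro k
      induction k with
      | zero => omega
      | succ k ih =>
        intro i hi
        rcases lt_or_ge i k with h | h
        · rw [hTsucc k, hgdef]
          simp only
          rw [dif_pos (hT k), Function.update_of_ne (by omega)]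
          exact ih i h
        · have : i = k := by omega
          subst this
          rfl
    set τ : ℕ → ℕ := fun i => T (i+1) i with hτ
    have hτk : ∀ k, ∀ i < k, τ i = T k i := by
      intro k i hi
      exact (hTs k i hi).symm
    have hDτ : ∀ k, D τ k = D (T k) k := by
      intro k; ext σ
      constructor
      · intro h
        have h' : ∀ i < k, σ i ≤ τ i := h
        intro i hi
        rw [← hτk k i hi]; exact h' i hi
      · intro h
        have h' : ∀ i < k, σ i ≤ T k i := h
        intro i hi
        show σ i ≤ τ i
        rw [hτk k i hi]; exact h' i hi
    have hτT : ∀ k, c < ν (f '' D τ k) := fun k => by rw [hDτ k]; exact hT k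
    -- the compact set
    set L : Set (ℕ → ℕ) := univ.pi (fun i => Iic (τ i)) with hL
    have hLc : IsCompact L := isCompact_univ_pi (fun i => (finite_Iic (τ i)).isCompact)
    refine ⟨f '' L, image_subset_range f L, ((hLc.image hf).isClosed).measurableSet, ?_⟩
    -- c ≤ ν (f '' L)
    have hsub : (⋂ k, closure (f '' D τ k)) ⊆ f '' L := by
      intro x hx
      obtain ⟨V, hV⟩ := (𝓝 x).exists_antitone_basis
      have hsel : ∀ k : ℕ, ∃ σ ∈ D τ k, f σ ∈ V k := by
        intro k
        have hxk : x ∈ closure (f '' D τ k) := mem_iInter.mp hx k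
        obtain ⟨y, hy1, hy2⟩ := mem_closure_iff_nhds.mp hxk (V k) (hV.toHasBasis.mem_of_mem trivial)
        obtain ⟨σ, hσ, rfl⟩ := hy2
        exact ⟨σ, hσ, hy1⟩
      choose σ hσD hσV using hsel
      have hσD' : ∀ k, ∀ i < k, σ k i ≤ τ i := fun k => hσD k
      set m : ℕ → ℕ := fun i => max (τ i) ((Finset.range (i+1)).sup (fun k => σ k i)) with hm
      have hσm : ∀ k, σ k ∈ univ.pi (fun i => Iic (m i)) := by
        intro k i _
        simp only [mem_Iic, hm]
        rcases le_or_gt k i with h | h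
        · exact le_max_of_le_right (Finset.le_sup (f := fun k => σ k i) (Finset.mem_range.mpr (Nat.lt_succ_of_le h)))
        · exact le_max_of_le_left (hσD' k i h)
      have hcm : IsCompact (univ.pi (fun i => Iic (m i))) :=
        isCompact_univ_pi (fun i => (finite_Iic (m i)).isCompact)
      obtain ⟨a, haL, φ, hφ, hconv⟩ := hcm.tendsto_subseq (x := σ) (fun k => hσm k)
      have haτ : a ∈ L := by
        intro i _
        simp only [mem_Iic]
        have hcoord : Tendsto (fun j => σ (φ j) i) atTop (𝓝 (a i)) :=
          (tendsto_pi_nhds.mp hconv) i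
        rw [nhds_discrete, tendsto_pure] at hcoord
        have hbd : ∀ᶠ j in atTop, σ (φ j) i ≤ τ i := by
          filter_upwards [eventually_ge_atTop (i+1)] with j hj
          exact hσD' (φ j) i (lt_of_lt_of_le (by omega : i < j) (hφ.id_le j))
        obtain ⟨j, hj1, hj2⟩ := (hcoord.and hbd).exists
        omega
      have hfa : Tendsto (fun j => f (σ (φ j))) atTop (𝓝 (f a)) :=
        ((hf.tendsto a).comp hconv)
      have hfx : Tendsto (fun j => f (σ (φ j))) atTop (𝓝 x) := by
        rw [hV.toHasBasis.tendsto_right_iff]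
        intro k _
        filter_upwards [eventually_ge_atTop k] with j hj
        exact hV.antitone (le_trans hj (hφ.id_le j)) (hσV (φ j))
      exact ⟨a, haτ, tendsto_nhds_unique hfa hfx⟩
    have hmeas : ν (⋂ k, closure (f '' D τ k)) = ⨅ k, ν (closure (f '' D τ k)) := by
      apply Directed.measure_iInter
      · exact fun k => isClosed_closure.measurableSet.nullMeasurableSet
      · apply Antitone.directed_ge
        intro a b hab
        apply closure_mono
        apply image_mono
        intro σ hσ
        have hσ' : ∀ i < b, σ i ≤ τ i := hσ
        intro i hi
        exact hσ' i (by omega)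
      · exact ⟨0, measure_ne_top ν _⟩
    calc c ≤ ⨅ k, ν (closure (f '' D τ k)) :=
              le_iInf fun k => le_trans (hτT k).le (measure_mono subset_closure)
         _ = ν (⋂ k, closure (f '' D τ k)) := hmeas.symm
         _ ≤ ν (f '' L) := measure_mono hsub
  -- assemble null-measurability from key
  rcases eq_or_ne (ν (range f)) 0 with h0 | h0
  · exact NullMeasurableSet.of_null h0
  have hrt : ν (range f) ≠ ⊤ := measure_ne_top ν _
  have hK : ∀ n : ℕ, ∃ K, K ⊆ range f ∧ MeasurableSet K ∧
      ν (range f) - ((n : ENNReal))⁻¹ ≤ ν K := by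
    intro n
    have hn : ((n : ENNReal))⁻¹ ≠ 0 := ENNReal.inv_ne_zero.mpr (ENNReal.natCast_ne_top n)
    exact key _ (ENNReal.sub_lt_self hrt h0 hn)
  choose K hKsub hKmeas hKge using hK
  set s : Set X := ⋃ n, K n with hs
  have hsmeas : MeasurableSet s := MeasurableSet.iUnion hKmeas
  have hssub : s ⊆ range f := iUnion_subset hKsub
  have hνs : ν (range f) ≤ ν s := by
    apply ENNReal.le_of_forall_pos_le_add
    intro ε hε _
    obtain ⟨n, hn⟩ := ENNReal.exists_inv_nat_lt (by exact_mod_cast hε.ne' : (ε : ENNReal) ≠ 0)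
    calc ν (range f) ≤ (ν (range f) - ((n : ENNReal))⁻¹) + ((n : ENNReal))⁻¹ :=
            le_tsub_add
      _ ≤ ν (K n) + ((n : ENNReal))⁻¹ := add_le_add_left (hKge n) _
      _ ≤ ν s + ε := add_le_add (measure_mono (subset_iUnion K n)) hn.le
  have hνs' : ν s = ν (range f) :=
    le_antisymm (measure_mono hssub) hνs
  set t : Set X := toMeasurable ν (range f) with ht
  have htmeas : MeasurableSet t := measurableSet_toMeasurable ν _
  have hst : s ⊆ t := hssub.trans (subset_toMeasurable ν _)
  have hνt : ν t = ν (range f) := measure_toMeasurable _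
  have hts : ν (t \ s) = 0 := by
    rw [measure_diff hst hsmeas.nullMeasurableSet (measure_ne_top ν s), hνt, hνs']
    exact tsub_self _
  have hae : (range f : Set X) =ᵐ[ν] t := by
    rw [ae_eq_set]
    constructor
    · rw [diff_eq_empty.mpr (subset_toMeasurable ν _)]; exact measure_empty
    · exact measure_mono_null (diff_subset_diff_right hssub) hts
  exact htmeas.nullMeasurableSet.congr hae.symm

section Proj
variable {Ω : Type*} [MeasurableSpace Ω]
  {E : Type*} [TopologicalSpace E] [PolishSpace E] [MeasurableSpace E] [BorelSpace E]

/-- Every product-measurable set factors through a measurable map to Cantor space. -/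
lemma exists_cantor_factor {A : Set (Ω × E)} (hA : MeasurableSet A) :
    ∃ φ : Ω → (ℕ → Bool), Measurable φ ∧ ∃ A' : Set ((ℕ → Bool) × E),
      MeasurableSet A' ∧ ∀ p : Ω × E, p ∈ A ↔ (φ p.1, p.2) ∈ A' := by
  classical
  set good : Set (Ω × E) → Prop := fun A =>
    ∃ φ : Ω → (ℕ → Bool), Measurable φ ∧ ∃ A' : Set ((ℕ → Bool) × E),
      MeasurableSet A' ∧ ∀ p : Ω × E, p ∈ A ↔ (φ p.1, p.2) ∈ A' with hgood
  suffices h : good A by exact h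
  let m' : MeasurableSpace (Ω × E) :=
    { MeasurableSet' := good
      measurableSet_empty := ⟨fun _ _ => false, measurable_const, ∅, MeasurableSet.empty,
        fun p => by simp⟩
      measurableSet_compl := by
        rintro B ⟨φ, hφ, A', hA', hiff⟩
        exact ⟨φ, hφ, A'ᶜ, hA'.compl, fun p => by simp [hiff p]⟩
      measurableSet_iUnion := by
        rintro B hB
        choose φ hφ A' hA' hiff using hB
        refine ⟨fun ω m => φ m.unpair.1 ω m.unpair.2, ?_,
          ⋃ n, (fun q : (ℕ → Bool) × E => ((fun k => q.1 (Nat.pair n k)), q.2)) ⁻¹' (A' n),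
          ?_, ?_⟩
        · exact measurable_pi_lambda _ fun m => (measurable_pi_apply m.unpair.2).comp (hφ m.unpair.1)
        · refine MeasurableSet.iUnion fun n => ?_
          refine MeasurableSet.preimage (hA' n) ?_
          exact Measurable.prodMk
            (measurable_pi_lambda _ fun k => (measurable_pi_apply (Nat.pair n k)).comp measurable_fst)
            measurable_snd
        · intro p
          simp only [mem_iUnion, mem_preimage]
          constructor
          · rintro ⟨n, hn⟩
            refine ⟨n, ?_⟩
            have : (fun k => φ (Nat.pair n k).unpair.1 p.1 (Nat.pair n k).unpair.2) = φ n p.1 := by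
              funext k; rw [Nat.unpair_pair]
            rw [this]
            exact (hiff n p).mp hn
          · rintro ⟨n, hn⟩
            refine ⟨n, (hiff n p).mpr ?_⟩
            have : (fun k => φ (Nat.pair n k).unpair.1 p.1 (Nat.pair n k).unpair.2) = φ n p.1 := by
              funext k; rw [Nat.unpair_pair]
            rwa [this] at hn }
  have hle : (Prod.instMeasurableSpace : MeasurableSpace (Ω × E)) ≤ m' := by
    show (‹MeasurableSpace Ω›.comap Prod.fst ⊔ ‹MeasurableSpace E›.comap Prod.snd) ≤ m'
    refine sup_le ?_ ?_
    · intro s hs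
      obtain ⟨M, hM, rfl⟩ := hs
      refine ⟨fun ω _ => if ω ∈ M then true else false,
        measurable_pi_lambda _ fun _ => Measurable.ite hM measurable_const measurable_const,
        {q : (ℕ → Bool) × E | q.1 0 = true}, ?_, ?_⟩
      · have hb : MeasurableSet {b : Bool | b = true} := trivial
        have : MeasurableSet ((fun q : (ℕ → Bool) × E => q.1 0) ⁻¹' {b | b = true}) :=
          ((measurable_pi_apply 0).comp measurable_fst) hb
        exact this
      · intro p
        simp only [mem_preimage, mem_setOf_eq]
        by_cases h : p.1 ∈ M <;> simp [h]
    · intro s hs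
      obtain ⟨B, hB, rfl⟩ := hs
      exact ⟨fun _ _ => false, measurable_const, {q | q.2 ∈ B},
        measurable_snd hB, fun p => Iff.rfl⟩
  exact hle A hA
end Proj

section Rest
variable {Ω : Type*} [MeasurableSpace Ω]
  {E : Type*} [TopologicalSpace E] [PolishSpace E] [MeasurableSpace E] [BorelSpace E]

/-- Measurable projection theorem. -/
lemma proj_nullMeasurableSet {A : Set (Ω × E)} (hA : MeasurableSet A)
    (μ : Measure Ω) [IsFiniteMeasure μ] :
    NullMeasurableSet {ω | ∃ b, (ω, b) ∈ A} μ := by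
  obtain ⟨φ, hφ, A', hA', hiff⟩ := exists_cantor_factor hA
  set S : Set (ℕ → Bool) := Prod.fst '' A' with hS
  haveI : PolishSpace (ℕ → Bool) := instPolishSpaceOfSeparableSpaceOfIsCompletelyMetrizableSpace
  have hSan : AnalyticSet S := (hA'.analyticSet).image_of_continuous continuous_fst
  obtain ⟨t, hts, htm, htae⟩ :=
    (analyticSet_nullMeasurableSet (μ.map φ) hSan).exists_measurable_subset_ae_eq
  have hgoal : {ω | ∃ b, (ω, b) ∈ A} = φ ⁻¹' S := by
    ext ω
    simp only [mem_setOf_eq, mem_preimage, hS]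
    constructor
    · rintro ⟨b, hb⟩
      exact ⟨(φ ω, b), (hiff (ω, b)).mp hb, rfl⟩
    · rintro ⟨⟨y, b⟩, hyb, hy⟩
      refine ⟨b, (hiff (ω, b)).mpr ?_⟩
      cases hy
      exact hyb
  rw [hgoal]
  have hpre : ∀ B : Set (ℕ → Bool), (μ.map φ) B = 0 → μ (φ ⁻¹' B) = 0 := by
    intro B hB
    obtain ⟨N, hBN, hN, hN0⟩ := exists_measurable_superset_of_null hB
    refine measure_mono_null (preimage_mono hBN) ?_
    rw [← Measure.map_apply hφ hN]
    exact hN0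
  obtain ⟨h1, h2⟩ := ae_eq_set.mp htae
  have hae' : (φ ⁻¹' t : Set Ω) =ᵐ[μ] φ ⁻¹' S := by
    rw [ae_eq_set, ← preimage_diff, ← preimage_diff]
    exact ⟨hpre _ h1, hpre _ h2⟩
  exact ((hφ htm).nullMeasurableSet).congr hae'

/-- Graph measurability of a closed-valued open-measurable multifunction. -/
lemma graph_measurableSet (G : Ω → Set E) (hGcl : ∀ ω, IsClosed (G ω))
    (hG : ∀ U : Set E, IsOpen U → MeasurableSet {ω | (G ω ∩ U).Nonempty}) :
    MeasurableSet {p : Ω × E | p.2 ∈ G p.1} := by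
  rcases isEmpty_or_nonempty E with hE | hE
  · have : {p : Ω × E | p.2 ∈ G p.1} = ∅ := by
      ext p; exact (hE.false p.2).elim
    rw [this]; exact MeasurableSet.empty
  letI := TopologicalSpace.upgradeIsCompletelyMetrizable E
  set x : ℕ → E := TopologicalSpace.denseSeq E with hx
  have hdense : DenseRange x := TopologicalSpace.denseRange_denseSeq E
  have hball : ∀ r : ℝ, 0 < r →
      MeasurableSet {p : Ω × E | (G p.1 ∩ Metric.ball p.2 r).Nonempty} := by
    intro r hr
    have hrepr : {p : Ω × E | (G p.1 ∩ Metric.ball p.2 r).Nonempty} =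
        ⋃ (n : ℕ) (q : ℚ) (_ : 0 < q),
          ({ω | (G ω ∩ Metric.ball (x n) q).Nonempty} ×ˢ {b | dist b (x n) + (q : ℝ) < r}) := by
      ext ⟨ω, b⟩
      simp only [mem_setOf_eq, mem_iUnion, mem_prod]
      constructor
      · rintro ⟨y, hyG, hyb⟩
        rw [Metric.mem_ball] at hyb
        have hδ : (0 : ℝ) < (r - dist y b) / 3 := by linarith
        obtain ⟨n, hn⟩ := Metric.denseRange_iff.mp hdense y _ hδ
        obtain ⟨q, hq1, hq2⟩ := exists_rat_btwn (by linarith : (r - dist y b) / 3 < 2 * ((r - dist y b) / 3))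
        have hq0 : (0 : ℚ) < q := by
          have : (0 : ℝ) < (q : ℝ) := lt_trans hδ hq1
          exact_mod_cast this
        refine ⟨n, q, hq0, ⟨y, hyG, ?_⟩, ?_⟩
        · rw [Metric.mem_ball]
          calc dist y (x n) < (r - dist y b) / 3 := hn
            _ < q := hq1
        · have hbx : dist b (x n) ≤ dist b y + dist y (x n) := dist_triangle b y (x n)
          have : dist b y = dist y b := dist_comm b y
          calc dist b (x n) + (q : ℝ) ≤ dist b y + dist y (x n) + q := by linarith
            _ < dist y b + (r - dist y b) / 3 + 2 * ((r - dist y b) / 3) := by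
                rw [this]; linarith
            _ = r := by ring
      · rintro ⟨n, q, hq0, ⟨y, hyG, hyball⟩, hbq⟩
        rw [Metric.mem_ball] at hyball
        refine ⟨y, hyG, ?_⟩
        rw [Metric.mem_ball]
        calc dist y b ≤ dist y (x n) + dist (x n) b := dist_triangle _ _ _
          _ = dist y (x n) + dist b (x n) := by rw [dist_comm (x n) b]
          _ < (q : ℝ) + dist b (x n) := by linarith
          _ < r := by linarith
    rw [hrepr]
    refine MeasurableSet.iUnion fun n => MeasurableSet.iUnion fun q => MeasurableSet.iUnion fun _ => ?_
    refine MeasurableSet.prod (hG _ Metric.isOpen_ball) ?_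
    have : IsOpen {b : E | dist b (x n) + (q : ℝ) < r} :=
      isOpen_lt (by fun_prop) continuous_const
    exact this.measurableSet
  have hrepr2 : {p : Ω × E | p.2 ∈ G p.1} =
      ⋂ k : ℕ, {p : Ω × E | (G p.1 ∩ Metric.ball p.2 (1 / (k + 1))).Nonempty} := by
    ext ⟨ω, b⟩
    simp only [mem_setOf_eq, mem_iInter]
    constructor
    · intro hb k
      exact ⟨b, hb, Metric.mem_ball_self (by positivity)⟩
    · intro h
      have : b ∈ closure (G ω) := by
        rw [Metric.mem_closure_iff]
        intro ε hε
        obtain ⟨k, hk⟩ := exists_nat_one_div_lt hε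
        obtain ⟨y, hyG, hyb⟩ := h k
        rw [Metric.mem_ball] at hyb
        exact ⟨y, hyG, by rw [dist_comm] at hyb; linarith⟩
      rwa [(hGcl ω).closure_eq] at this
  rw [hrepr2]
  exact MeasurableSet.iInter fun k => hball _ (by positivity)

end Rest

end Aux

open MeasureTheory Set Filter Topology in
/-- If `G : Ω → E` and `F : Ω × E → X` are closed-valued open-measurable multifunctions
into Polish spaces, then `H ω = ⋃ b ∈ G ω, F (ω, b)` is universally open-measurable. -/
theorem stmt_18 {Ω : Type*} [MeasurableSpace Ω]
    {E : Type*} [TopologicalSpace E] [PolishSpace E] [MeasurableSpace E] [BorelSpace E]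
    {X : Type*} [TopologicalSpace X] [PolishSpace X]
    (G : Ω → Set E)
    (hGcl : ∀ ω, IsClosed (G ω))
    (hG : ∀ U : Set E, IsOpen U → MeasurableSet {ω | (G ω ∩ U).Nonempty})
    (F : Ω × E → Set X)
    (hFcl : ∀ p, IsClosed (F p))
    (hF : ∀ U : Set X, IsOpen U → MeasurableSet {p : Ω × E | (F p ∩ U).Nonempty}) :
    ∀ U : Set X, IsOpen U → ∀ (μ : Measure Ω), IsFiniteMeasure μ →
      NullMeasurableSet {ω | ((⋃ b ∈ G ω, F (ω, b)) ∩ U).Nonempty} μ := by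
  intro U hU μ hμ
  set A : Set (Ω × E) := {p | p.2 ∈ G p.1} ∩ {p | (F p ∩ U).Nonempty} with hA
  have hAm : MeasurableSet A := (graph_measurableSet G hGcl hG).inter (hF U hU)
  have hset : {ω | ((⋃ b ∈ G ω, F (ω, b)) ∩ U).Nonempty} = {ω | ∃ b, (ω, b) ∈ A} := by
    ext ω
    simp only [Set.mem_setOf_eq]
    constructor
    · rintro ⟨z, hz, hzU⟩
      obtain ⟨b, hbG, hzF⟩ := Set.mem_iUnion₂.mp hz
      exact ⟨b, hbG, ⟨z, hzF, hzU⟩⟩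
    · rintro ⟨b, hbG, z, hzF, hzU⟩
      exact ⟨z, Set.mem_iUnion₂.mpr ⟨b, hbG, hzF⟩, hzU⟩
  rw [hset]
  exact proj_nullMeasurableSet hAm μ
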